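/- (Riccati comparison, positive-discriminant case) Let a > 0, b > 0, T > 0, and let F: [0, T) → ℝ be differentiable with F'(t) ≥ a(F(t)² − b²) for all t ∈ [0,T). If F(0) > b·coth(a b T), then there exists t₁ ∈ (0, T) such that F(t) → +∞ as t → t₁⁻ (equivalently, F cannot be extended to a finite-valued differentiable function on all of [0,T) satisfying the inequality); more precisely, F(t) ≥ b(1 + K e^{2abt})/(1 − K e^{2abt}) wherever defined, with K = (F(0)−b)/(F(0)+b) ∈ (0,1), and the blow-up time is ≤ (1/(2ab)) ln(1/K) < T. -/

import Mathlib

open Real Set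

/-- Riccati comparison, positive discriminant: no differentiable F on [0,T]
with F' ≥ a(F² − b²) can satisfy F(0) > b·coth(abT). -/
theorem stmt8 (a b T : ℝ) (ha : 0 < a) (hb : 0 < b) (hT : 0 < T)
    (F F' : ℝ → ℝ)
    (hderiv : ∀ t ∈ Icc (0 : ℝ) T, HasDerivAt F (F' t) t)
    (hineq : ∀ t ∈ Icc (0 : ℝ) T, a * (F t ^ 2 - b ^ 2) ≤ F' t)
    (h0 : F 0 > b * (Real.cosh (a * b * T) / Real.sinh (a * b * T))) :
    False := by
  have hab : 0 < a * b := mul_pos ha hb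
  -- the comparison solution
  set G : ℝ → ℝ := fun t => b * (Real.cosh (a * b * (T - t)) / Real.sinh (a * b * (T - t)))
    with hGdef
  -- G derivative at t < T
  have hGderiv : ∀ t : ℝ, t < T → HasDerivAt G (a * ((G t) ^ 2 - b ^ 2)) t := by
    intro t ht
    have hu : 0 < a * b * (T - t) := mul_pos hab (by linarith)
    have hs : Real.sinh (a * b * (T - t)) ≠ 0 := ne_of_gt (Real.sinh_pos_iff.2 hu)
    have hlin : HasDerivAt (fun t : ℝ => a * b * (T - t)) (-(a * b)) t := by
      simpa using ((hasDerivAt_id t).const_sub T).const_mul (a * b)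
    have hc := hlin.cosh
    have hsn := hlin.sinh
    have hdiv := hc.div hsn hs
    have := (hdiv.const_mul b)
    convert this using 1
    have h1 := Real.cosh_sq_sub_sinh_sq (a * b * (T - t))
    show a * ((b * (Real.cosh (a * b * (T - t)) / Real.sinh (a * b * (T - t)))) ^ 2 - b ^ 2) = _
    field_simp
    ring_nf
    try nlinarith [Real.sinh_pos_iff.2 hu, h1]
    all_goals rfl
  -- continuity facts
  have hFc : ∀ t ∈ Icc (0:ℝ) T, ContinuousAt F t := fun t ht => (hderiv t ht).continuousAt
  have hGc : ∀ t : ℝ, t < T → ContinuousAt G t := by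
    intro t ht
    exact (hGderiv t ht).continuousAt
  -- max of F on [0,T]
  obtain ⟨x, hx, hmax⟩ := isCompact_Icc.exists_isMaxOn (nonempty_Icc.2 hT.le)
    (fun t ht => (hFc t ht).continuousWithinAt)
  set M : ℝ := max (F x) 0 + 1 with hMdef
  have hM : 0 < M := by positivity
  -- choose t₁ close to T
  set u₀ : ℝ := Real.arsinh (b / (2 * M)) with hu0def
  have hu0 : 0 < u₀ := Real.arsinh_pos_iff.2 (by positivity)
  set ε : ℝ := min (u₀ / (a * b)) (T / 2) with hεdef
  have hε : 0 < ε := lt_min (by positivity) (by linarith)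
  set t₁ : ℝ := T - ε with ht1def
  have ht₁0 : 0 < t₁ := by
    have : ε ≤ T / 2 := min_le_right _ _
    simp only [ht1def]; linarith
  have ht₁T : t₁ < T := by simp only [ht1def]; linarith
  have ht₁Icc : t₁ ∈ Icc (0:ℝ) T := ⟨ht₁0.le, ht₁T.le⟩
  -- F t₁ < G t₁ numerically
  have hsinh_pos : 0 < Real.sinh (a * b * (T - t₁)) := Real.sinh_pos_iff.2 (by
    have : T - t₁ = ε := by simp [ht1def]
    rw [this]; positivity)
  have hsinh_le : Real.sinh (a * b * (T - t₁)) ≤ b / (2 * M) := by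
    have h1 : T - t₁ = ε := by simp [ht1def]
    have h2 : a * b * ε ≤ u₀ := by
      have : ε ≤ u₀ / (a * b) := min_le_left _ _
      calc a * b * ε ≤ a * b * (u₀ / (a * b)) := by nlinarith
        _ = u₀ := by field_simp
    calc Real.sinh (a * b * (T - t₁)) ≤ Real.sinh u₀ := by
          rw [h1]; exact Real.sinh_le_sinh.2 h2
      _ = b / (2 * M) := Real.sinh_arsinh _
  have hGt₁ : 2 * M ≤ G t₁ := by
    have hch : (1:ℝ) ≤ Real.cosh (a * b * (T - t₁)) := Real.one_le_cosh _
    have hsnz : Real.sinh (a * b * (T - t₁)) ≤ b / (2 * M) := hsinh_le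
    have : b / (b / (2 * M)) ≤ b / Real.sinh (a * b * (T - t₁)) := by
      apply div_le_div_of_nonneg_left hb.le hsinh_pos hsnz
    have hb2 : b / (b / (2 * M)) = 2 * M := by field_simp
    have : 2 * M ≤ b / Real.sinh (a * b * (T - t₁)) := by rw [← hb2]; exact this
    calc 2 * M ≤ b / Real.sinh (a * b * (T - t₁)) := this
      _ ≤ b * (Real.cosh (a * b * (T - t₁)) / Real.sinh (a * b * (T - t₁))) := by
          rw [div_eq_mul_inv, div_eq_mul_inv]
          nlinarith [mul_le_mul_of_nonneg_right hch (inv_nonneg.2 hsinh_pos.le),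
            inv_pos.2 hsinh_pos]
      _ = G t₁ := rfl
  have hFt₁ : F t₁ < 2 * M := by
    have h1 : F t₁ ≤ F x := hmax ht₁Icc
    have : F x ≤ max (F x) 0 := le_max_left _ _
    simp only [hMdef]; linarith
  -- Now the comparison: F t₁ > G t₁
  -- clamp
  set proj : ℝ → ℝ := fun s => max 0 (min s t₁) with hprojdef
  have hprojmem : ∀ s, proj s ∈ Icc (0:ℝ) t₁ := fun s =>
    ⟨le_max_left _ _, max_le (le_of_lt ht₁0) (min_le_right _ _)⟩
  have hprojc : Continuous proj := continuous_const.max (continuous_id.min continuous_const)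
  have hprojid : ∀ s ∈ Icc (0:ℝ) t₁, proj s = s := by
    intro s hs
    simp only [hprojdef]
    rw [min_eq_left hs.2, max_eq_right hs.1]
  set f : ℝ → ℝ := fun s => a * (F (proj s) + G (proj s)) with hfdef
  have hfc : Continuous f := by
    rw [continuous_iff_continuousAt]
    intro s
    have hmem := hprojmem s
    have hmemT : proj s ∈ Icc (0:ℝ) T := ⟨hmem.1, le_trans hmem.2 ht₁T.le⟩
    have h1 : ContinuousAt (fun y => a * (F y + G y)) (proj s) :=
      (continuousAt_const.mul ((hFc _ hmemT).add (hGc _ (lt_of_le_of_lt hmem.2 ht₁T))))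
    exact h1.comp hprojc.continuousAt
  set P : ℝ → ℝ := fun t => ∫ s in (0:ℝ)..t, f s with hPdef
  have hPderiv : ∀ t : ℝ, HasDerivAt P (f t) t := by
    intro t
    exact intervalIntegral.integral_hasDerivAt_right
      (hfc.intervalIntegrable _ _)
      (hfc.stronglyMeasurableAtFilter _ _)
      hfc.continuousAt
  set h : ℝ → ℝ := fun t => (F t - G t) * Real.exp (-P t) with hhdef
  have hmono : MonotoneOn h (Icc 0 t₁) := by
    apply monotoneOn_of_deriv_nonneg (convex_Icc 0 t₁)
    · -- continuity
      intro t ht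
      have htT : t ∈ Icc (0:ℝ) T := ⟨ht.1, le_trans ht.2 ht₁T.le⟩
      exact (((hFc t htT).sub (hGc t (lt_of_le_of_lt ht.2 ht₁T))).mul
        (((hPderiv t).continuousAt).neg.rexp)).continuousWithinAt
    · intro t ht
      rw [interior_Icc] at ht
      have htT : t ∈ Icc (0:ℝ) T := ⟨ht.1.le, le_trans ht.2.le ht₁T.le⟩
      have hFt := hderiv t htT
      have hGt := hGderiv t (lt_of_lt_of_le ht.2 ht₁T.le)
      have hPt := hPderiv t
      exact (((hFt.sub hGt).mul (hPt.neg.exp)).differentiableAt).differentiableWithinAt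
    · intro t ht
      rw [interior_Icc] at ht
      have htIcc : t ∈ Icc (0:ℝ) t₁ := ⟨ht.1.le, ht.2.le⟩
      have htT : t ∈ Icc (0:ℝ) T := ⟨ht.1.le, le_trans ht.2.le ht₁T.le⟩
      have hFt := hderiv t htT
      have hGt := hGderiv t (lt_of_lt_of_le ht.2 ht₁T.le)
      have hPt := hPderiv t
      have hft : f t = a * (F t + G t) := by simp only [hfdef, hprojid t htIcc]
      have hD : HasDerivAt h ((F' t - a * ((G t)^2 - b^2)) * Real.exp (-P t)
          + (F t - G t) * (Real.exp (-P t) * -(f t))) t :=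
        (hFt.sub hGt).mul (hPt.neg.exp)
      rw [hD.deriv]
      have hexp : 0 < Real.exp (-P t) := Real.exp_pos _
      have hiq := hineq t htT
      rw [hft]
      nlinarith [hexp, hiq]
  -- conclude
  have hP0 : P 0 = 0 := by simp [hPdef]
  have hG0 : G 0 = b * (Real.cosh (a * b * T) / Real.sinh (a * b * T)) := by
    simp [hGdef]
  have hh0 : 0 < h 0 := by
    simp only [hhdef, hP0, neg_zero, Real.exp_zero, mul_one, hG0]
    linarith
  have hle := hmono (left_mem_Icc.2 ht₁0.le) (right_mem_Icc.2 ht₁0.le) ht₁0.le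
  have hht₁ : 0 < h t₁ := lt_of_lt_of_le hh0 hle
  have : 0 < F t₁ - G t₁ := by
    by_contra hc
    push_neg at hc
    have : h t₁ ≤ 0 := mul_nonpos_of_nonpos_of_nonneg (by linarith) (Real.exp_pos _).le
    linarith
  linarith
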